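/- Let V_max > 0, u ∈ (0,V_max], P ∈ (0,1], σ ≥ 0. Let η be a compactly supported Borel probability measure on ℝ with ∫ ξ dη(ξ) = 0 and ∫ ξ² dη(ξ) = σ². Let Δ_A : [0,u] → ℝ be continuous, let f : [0,u] → ℝ be nonnegative and integrable, and let φ : ℝ → ℝ be twice continuously differentiable with φ″ Lipschitz continuous. For ε ∈ (0,1) and (v*, ξ) ∈ [0,u] × ℝ set v_ε(v*, ξ) = v* + √(εP)·Δ_A(v*)·(√(εP) + ξ). Then lim_{ε→0⁺} (1/ε)·∫_ℝ ∫₀ᵘ (φ(v_ε(v*, ξ)) − φ(v*))·f(v*) dv* dη(ξ) = P·∫₀ᵘ Δ_A(v*)·φ′(v*)·f(v*) dv* + (σ²P/2)·∫₀ᵘ Δ_A(v*)²·φ″(v*)·f(v*) dv*. -/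

import Mathlib

open MeasureTheory Filter Real

lemma taylor2_aux (φ φ' φ'' : ℝ → ℝ) (hφ' : ∀ x, HasDerivAt φ (φ' x) x)
    (hφ'' : ∀ x, HasDerivAt φ' (φ'' x) x) (L : NNReal) (hL : LipschitzWith L φ'')
    (x h : ℝ) : |φ (x + h) - φ x - φ' x * h - φ'' x * h ^ 2 / 2| ≤ L * |h| ^ 3 := by
  set χ : ℝ → ℝ := fun t => φ' (x + t) - φ' x - φ'' x * t with hχdef
  set ψ : ℝ → ℝ := fun t => φ (x + t) - φ x - φ' x * t - φ'' x * t ^ 2 / 2 with hψdef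
  have habs : ∀ t ∈ Set.uIcc (0:ℝ) h, |t| ≤ |h| := by
    intro t ht
    rw [Set.mem_uIcc] at ht
    rcases ht with ⟨h1, h2⟩ | ⟨h1, h2⟩
    · rw [abs_of_nonneg h1]; exact h2.trans (le_abs_self h)
    · rw [abs_of_nonpos h2]; exact (neg_le_neg h1).trans (neg_le_abs h)
  have hχd : ∀ t, HasDerivAt χ (φ'' (x + t) - φ'' x) t := by
    intro t
    have h1 : HasDerivAt (fun t => φ' (x + t)) (φ'' (x + t)) t := by
      have := (hφ'' (x + t)).comp t ((hasDerivAt_id t).const_add x)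
      exact this.congr_deriv (mul_one _)
    exact ((h1.sub_const (φ' x)).sub ((hasDerivAt_id t).const_mul (φ'' x))).congr_deriv (by ring)
  have hψd : ∀ t, HasDerivAt ψ (χ t) t := by
    intro t
    have h1 : HasDerivAt (fun t => φ (x + t)) (φ' (x + t)) t := by
      have := (hφ' (x + t)).comp t ((hasDerivAt_id t).const_add x)
      exact this.congr_deriv (mul_one _)
    have h2 : HasDerivAt (fun t : ℝ => φ'' x * t ^ 2 / 2) (φ'' x * t) t := by
      have := ((hasDerivAt_pow 2 t).const_mul (φ'' x)).div_const 2
      exact this.congr_deriv (by push_cast; ring)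
    have := ((h1.sub_const (φ x)).sub ((hasDerivAt_id t).const_mul (φ' x))).sub h2
    exact this.congr_deriv (by simp only [hχdef]; ring)
  have hχb : ∀ t ∈ Set.uIcc (0:ℝ) h, |χ t| ≤ (L * |h|) * |h| := by
    intro t ht
    have := (convex_uIcc (0:ℝ) h).norm_image_sub_le_of_norm_hasDerivWithin_le
      (fun y hy => (hχd y).hasDerivWithinAt) (C := L * |h|)
      (fun y hy => by
        have h1 : |φ'' (x + y) - φ'' x| ≤ L * |y| := by
          have := hL.dist_le_mul (x + y) x
          simpa [Real.dist_eq, abs_sub_comm] using this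
        have h2 : (L : ℝ) * |y| ≤ L * |h| :=
          mul_le_mul_of_nonneg_left (habs y hy) (by positivity)
        simpa [Real.norm_eq_abs] using h1.trans h2)
      Set.left_mem_uIcc ht
    have hχ0 : χ 0 = 0 := by simp [hχdef]
    have h3 : |χ t| ≤ (L * |h|) * |t| := by simpa [Real.norm_eq_abs, hχ0] using this
    exact h3.trans (mul_le_mul_of_nonneg_left (habs t ht) (by positivity))
  have hψb := (convex_uIcc (0:ℝ) h).norm_image_sub_le_of_norm_hasDerivWithin_le
    (fun y hy => (hψd y).hasDerivWithinAt) (C := (L * |h|) * |h|)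
    (fun y hy => by simpa [Real.norm_eq_abs] using hχb y hy)
    Set.left_mem_uIcc Set.right_mem_uIcc
  have hψ0 : ψ 0 = 0 := by simp [hψdef]
  have : |ψ h| ≤ L * |h| * |h| * |h| := by
    simpa [Real.norm_eq_abs, hψ0] using hψb
  calc |φ (x + h) - φ x - φ' x * h - φ'' x * h ^ 2 / 2| = |ψ h| := by rw [hψdef]
    _ ≤ L * |h| * |h| * |h| := this
    _ = L * |h| ^ 3 := by ring


/-- Grazing collision limit of the acceleration part of the Boltzmann-type traffic model:
as `ε → 0⁺`, the rescaled collision kernel converges to the drift–diffusion terms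
`P ∫ Δ_A φ′ f + (σ²P/2) ∫ Δ_A² φ″ f` of the Fokker-Planck model. -/
theorem grazing_limit_acceleration (Vmax u P σ : ℝ) (hV : 0 < Vmax)
    (hu : u ∈ Set.Ioc (0 : ℝ) Vmax) (hP : P ∈ Set.Ioc (0 : ℝ) 1) (hσ : 0 ≤ σ)
    (η : Measure ℝ) [IsProbabilityMeasure η]
    (hsupp : ∃ C : ℝ, ∀ᵐ ξ ∂η, |ξ| ≤ C)
    (hmean : ∫ ξ, ξ ∂η = 0) (hvar : ∫ ξ, ξ ^ 2 ∂η = σ ^ 2)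
    (ΔA : ℝ → ℝ) (hΔA : ContinuousOn ΔA (Set.Icc 0 u))
    (f : ℝ → ℝ) (hf_nonneg : ∀ v ∈ Set.Icc (0 : ℝ) u, 0 ≤ f v)
    (hf_int : IntervalIntegrable f volume 0 u)
    (φ φ' φ'' : ℝ → ℝ) (hφ' : ∀ x, HasDerivAt φ (φ' x) x)
    (hφ'' : ∀ x, HasDerivAt φ' (φ'' x) x) (hφ''cont : Continuous φ'')
    (hφ''lip : ∃ L : NNReal, LipschitzWith L φ'') :
    Tendsto (fun ε : ℝ =>
        1 / ε * ∫ ξ, (∫ v in (0 : ℝ)..u,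
          (φ (v + Real.sqrt (ε * P) * ΔA v * (Real.sqrt (ε * P) + ξ)) - φ v) * f v) ∂η)
      (nhdsWithin 0 (Set.Ioi 0))
      (nhds (P * (∫ v in (0 : ℝ)..u, ΔA v * φ' v * f v)
        + σ ^ 2 * P / 2 * ∫ v in (0 : ℝ)..u, ΔA v ^ 2 * φ'' v * f v)) := by
  obtain ⟨hu0, huV⟩ := hu
  have hu0' : (0:ℝ) ≤ u := hu0.le
  obtain ⟨hP0, hP1⟩ := hP
  obtain ⟨L, hL⟩ := hφ''lip
  obtain ⟨C₀, hC₀⟩ := hsupp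
  set C := max C₀ 0 with hCdef
  have hC0 : (0:ℝ) ≤ C := le_max_right _ _
  have hCae : ∀ᵐ ξ ∂η, |ξ| ≤ C := hC₀.mono fun ξ h => h.trans (le_max_left _ _)
  have hφd : Differentiable ℝ φ := fun x => (hφ' x).differentiableAt
  have hφ'd : Differentiable ℝ φ' := fun x => (hφ'' x).differentiableAt
  have hφc : Continuous φ := hφd.continuous
  have hφ'c : Continuous φ' := hφ'd.continuous
  obtain ⟨M, hM⟩ : ∃ M, ∀ v ∈ Set.Icc (0:ℝ) u, |ΔA v| ≤ M := by
    obtain ⟨M, hM⟩ := isCompact_Icc.exists_bound_of_continuousOn hΔA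
    exact ⟨M, fun v hv => by simpa using hM v hv⟩
  have hM0 : (0:ℝ) ≤ M := le_trans (abs_nonneg _) (hM 0 (by simp [hu0']))
  set N := ∫ v in (0:ℝ)..u, |f v| with hNdef
  have hN0 : 0 ≤ N := intervalIntegral.integral_nonneg hu0' (fun v _ => abs_nonneg _)
  set A := ∫ v in (0:ℝ)..u, ΔA v * φ' v * f v with hAdef
  set B := ∫ v in (0:ℝ)..u, ΔA v ^ 2 * φ'' v * f v with hBdef
  set K := (L:ℝ) * M^3 * (1+C)^3 * N with hKdef
  have hK0 : 0 ≤ K := by positivity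
  clear_value C N A B K
  have hAint : IntervalIntegrable (fun v => ΔA v * φ' v * f v) volume 0 u :=
    hf_int.continuousOn_mul (by rw [Set.uIcc_of_le hu0']; exact hΔA.mul hφ'c.continuousOn)
  have hBint : IntervalIntegrable (fun v => ΔA v ^ 2 * φ'' v * f v) volume 0 u :=
    hf_int.continuousOn_mul (by rw [Set.uIcc_of_le hu0']
                                exact (hΔA.pow 2).mul hφ''cont.continuousOn)
  have hfabs : IntervalIntegrable (fun v => |f v|) volume 0 u := hf_int.abs
  have hint1 : Integrable (fun ξ : ℝ => ξ) η := by
    refine Integrable.mono' (integrable_const C) aestronglyMeasurable_id ?_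
    filter_upwards [hCae] with ξ hξ
    simpa using hξ
  have hint2 : Integrable (fun ξ : ℝ => ξ^2) η := by
    apply Integrable.mono' (integrable_const (C^2)) (measurable_id.pow_const 2).aestronglyMeasurable
    filter_upwards [hCae] with ξ hξ
    rw [Real.norm_eq_abs, abs_pow]
    gcongr
    simpa using hξ
  have key : ∀ ε ∈ Set.Ioo (0:ℝ) 1,
      |1/ε * (∫ ξ, (∫ v in (0:ℝ)..u,
          (φ (v + Real.sqrt (ε * P) * ΔA v * (Real.sqrt (ε * P) + ξ)) - φ v) * f v) ∂η)
        - (P*A + σ^2*P/2*B + ε*(P^2/2*B))| ≤ K * Real.sqrt ε := by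
    rintro ε ⟨hε0, hε1⟩
    set s := Real.sqrt (ε*P) with hsdef
    have hεP0 : 0 < ε*P := mul_pos hε0 hP0
    have hεPε : ε*P ≤ ε := mul_le_of_le_one_right hε0.le hP1
    have hεP1 : ε*P ≤ 1 := hεPε.trans hε1.le
    have hs0 : 0 < s := Real.sqrt_pos.mpr hεP0
    have hs2 : s^2 = ε*P := Real.sq_sqrt hεP0.le
    have hs1 : s ≤ 1 := Real.sqrt_le_one.mpr hεP1
    have hsε : s ≤ Real.sqrt ε := by rw [hsdef]; exact Real.sqrt_le_sqrt hεPε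
    clear_value s
    set I : ℝ → ℝ := fun ξ => ∫ v in (0:ℝ)..u,
        (φ (v + s * ΔA v * (s + ξ)) - φ v) * f v with hIdef
    set ρ : ℝ → ℝ := fun ξ => I ξ - (s*(s+ξ)*A + s^2*(s+ξ)^2/2*B) with hρdef
    clear_value I ρ
    have hGcont : ∀ ξ : ℝ, ContinuousOn (fun v => φ (v + s * ΔA v * (s + ξ)) - φ v)
        (Set.Icc 0 u) := fun ξ =>
      (hφc.comp_continuousOn (continuousOn_id.add
        ((continuousOn_const.mul hΔA).mul continuousOn_const))).sub hφc.continuousOn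
    have hgint : ∀ ξ : ℝ, IntervalIntegrable
        (fun v => (φ (v + s * ΔA v * (s + ξ)) - φ v) * f v) volume 0 u :=
      fun ξ => hf_int.continuousOn_mul (by rw [Set.uIcc_of_le hu0']; exact hGcont ξ)
    have hρbound : ∀ ξ : ℝ, |ρ ξ| ≤ (L:ℝ) * s^3 * M^3 * |s+ξ|^3 * N := by
      intro ξ
      have i1 : IntervalIntegrable (fun v => s*(s+ξ)*(ΔA v * φ' v * f v)) volume 0 u :=
        hAint.const_mul _
      have i2 : IntervalIntegrable (fun v => s^2*(s+ξ)^2/2*(ΔA v ^ 2 * φ'' v * f v))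
          volume 0 u := hBint.const_mul _
      have e1 : s*(s+ξ)*A = ∫ v in (0:ℝ)..u, s*(s+ξ)*(ΔA v * φ' v * f v) := by
        rw [hAdef]; exact (intervalIntegral.integral_const_mul _ _).symm
      have e2 : s^2*(s+ξ)^2/2*B = ∫ v in (0:ℝ)..u, s^2*(s+ξ)^2/2*(ΔA v ^ 2 * φ'' v * f v) := by
        rw [hBdef]; exact (intervalIntegral.integral_const_mul _ _).symm
      have e3 : ρ ξ = ∫ v in (0:ℝ)..u,
          ((φ (v + s * ΔA v * (s + ξ)) - φ v) * f v - s*(s+ξ)*(ΔA v * φ' v * f v)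
            - s^2*(s+ξ)^2/2*(ΔA v ^ 2 * φ'' v * f v)) := by
        have h4 : ρ ξ = (I ξ - s*(s+ξ)*A) - s^2*(s+ξ)^2/2*B := by
          simp only [hρdef]; ring
        rw [h4]
        simp only [hIdef]
        rw [e1, e2, ← intervalIntegral.integral_sub (hgint ξ) i1,
          ← intervalIntegral.integral_sub ((hgint ξ).sub i1) i2]
      have iInt : IntervalIntegrable (fun v =>
          (φ (v + s * ΔA v * (s + ξ)) - φ v) * f v - s*(s+ξ)*(ΔA v * φ' v * f v)
            - s^2*(s+ξ)^2/2*(ΔA v ^ 2 * φ'' v * f v)) volume 0 u := ((hgint ξ).sub i1).sub i2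
      rw [e3]
      calc |∫ v in (0:ℝ)..u, ((φ (v + s * ΔA v * (s + ξ)) - φ v) * f v
              - s*(s+ξ)*(ΔA v * φ' v * f v) - s^2*(s+ξ)^2/2*(ΔA v ^ 2 * φ'' v * f v))|
          ≤ ∫ v in (0:ℝ)..u, |(φ (v + s * ΔA v * (s + ξ)) - φ v) * f v
              - s*(s+ξ)*(ΔA v * φ' v * f v) - s^2*(s+ξ)^2/2*(ΔA v ^ 2 * φ'' v * f v)| :=
            intervalIntegral.abs_integral_le_integral_abs hu0'
        _ ≤ ∫ v in (0:ℝ)..u, ((L:ℝ) * s^3 * M^3 * |s+ξ|^3) * |f v| := by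
            apply intervalIntegral.integral_mono_on hu0' iInt.abs (hfabs.const_mul _)
            intro v hv
            have ht := taylor2_aux φ φ' φ'' hφ' hφ'' L hL v (s * ΔA v * (s + ξ))
            have heq : (φ (v + s * ΔA v * (s + ξ)) - φ v) * f v
                - s*(s+ξ)*(ΔA v * φ' v * f v) - s^2*(s+ξ)^2/2*(ΔA v ^ 2 * φ'' v * f v)
                = (φ (v + s * ΔA v * (s + ξ)) - φ v - φ' v * (s * ΔA v * (s + ξ))
                  - φ'' v * (s * ΔA v * (s + ξ))^2/2) * f v := by ring
            rw [heq, abs_mul]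
            have h2 : |s * ΔA v * (s + ξ)| ≤ s * M * |s+ξ| := by
              rw [abs_mul, abs_mul, abs_of_pos hs0]
              exact mul_le_mul_of_nonneg_right
                (mul_le_mul_of_nonneg_left (hM v hv) hs0.le) (abs_nonneg _)

            calc |φ (v + s * ΔA v * (s + ξ)) - φ v - φ' v * (s * ΔA v * (s + ξ))
                  - φ'' v * (s * ΔA v * (s + ξ))^2/2| * |f v|
                ≤ ((L:ℝ) * (s * M * |s+ξ|)^3) * |f v| := by
                  apply mul_le_mul_of_nonneg_right _ (abs_nonneg _)
                  exact ht.trans (mul_le_mul_of_nonneg_left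
                    (pow_le_pow_left₀ (abs_nonneg _) h2 3) (by positivity))
              _ = ((L:ℝ) * s^3 * M^3 * |s+ξ|^3) * |f v| := by ring
        _ = (L:ℝ) * s^3 * M^3 * |s+ξ|^3 * N := by
            rw [intervalIntegral.integral_const_mul, hNdef]
    have hIcont : Continuous I := by
      have hIoc : I = fun ξ => ∫ v in Set.Ioc (0:ℝ) u,
          (φ (v + s * ΔA v * (s + ξ)) - φ v) * f v := by
        funext ξ
        simp only [hIdef]
        exact intervalIntegral.integral_of_le hu0'
      rw [hIoc, continuous_iff_continuousAt]
      intro ξ₀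
      have hGfull : ContinuousOn (fun p : ℝ × ℝ => φ (p.2 + s * ΔA p.2 * (s + p.1)) - φ p.2)
          (Set.Icc (ξ₀-1) (ξ₀+1) ×ˢ Set.Icc 0 u) := by
        apply ContinuousOn.sub
        · apply hφc.comp_continuousOn
          apply ContinuousOn.add continuous_snd.continuousOn
          apply ContinuousOn.mul
          · exact continuousOn_const.mul (hΔA.comp continuous_snd.continuousOn
              (fun p hp => hp.2))
          · exact (continuous_const.add continuous_fst).continuousOn
        · exact hφc.comp_continuousOn continuous_snd.continuousOn
      obtain ⟨K₁, hK₁⟩ := (isCompact_Icc.prod isCompact_Icc).exists_bound_of_continuousOn hGfull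
      apply continuousAt_of_dominated (bound := fun v => max K₁ 0 * |f v|)
      · filter_upwards with ξ
        exact (((hGcont ξ).mono Set.Ioc_subset_Icc_self).aestronglyMeasurable
          measurableSet_Ioc).mul hf_int.1.aestronglyMeasurable
      · filter_upwards [Icc_mem_nhds (by linarith : ξ₀ - 1 < ξ₀) (by linarith : ξ₀ < ξ₀ + 1)]
          with ξ hξ
        filter_upwards [ae_restrict_mem measurableSet_Ioc] with v hv
        rw [Real.norm_eq_abs, abs_mul]
        apply mul_le_mul _ le_rfl (abs_nonneg _) (le_max_right _ _)
        exact le_trans (by simpa using hK₁ (ξ, v) ⟨hξ, Set.Ioc_subset_Icc_self hv⟩)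
          (le_max_left _ _)
      · exact (hf_int.1.abs.const_mul (max K₁ 0))
      · filter_upwards with v
        apply ContinuousAt.mul _ continuousAt_const
        apply ContinuousAt.sub _ continuousAt_const
        exact (hφc.comp (continuous_const.add (continuous_const.mul
          (continuous_const.add continuous_id)))).continuousAt
    have hρc : Continuous ρ := by
      rw [hρdef]
      show Continuous fun ξ => I ξ - (s*(s+ξ)*A + s^2*(s+ξ)^2/2*B)
      apply hIcont.sub
      fun_prop
    have hρle : ∀ ξ : ℝ, |ξ| ≤ C → |ρ ξ| ≤ (L:ℝ)*s^3*M^3*(1+C)^3*N := by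
      intro ξ hξ
      refine (hρbound ξ).trans ?_
      have hsx : |s+ξ| ≤ 1 + C := (abs_add_le s ξ).trans (by rw [abs_of_pos hs0]; linarith)
      gcongr
    have hρint : Integrable ρ η := by
      refine Integrable.mono' (integrable_const ((L:ℝ)*s^3*M^3*(1+C)^3*N))
        hρc.aestronglyMeasurable ?_
      filter_upwards [hCae] with ξ hξ
      simpa [Real.norm_eq_abs] using hρle ξ hξ
    have hpoly : ∀ ξ : ℝ, I ξ = ((s^2*A + s^4/2*B) + (s*A + s^3*B)*ξ + (s^2/2*B)*ξ^2) + ρ ξ := by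
      intro ξ
      simp only [hρdef]
      ring
    have hpint1 : Integrable (fun ξ : ℝ => (s^2*A + s^4/2*B) + (s*A + s^3*B)*ξ) η :=
      (integrable_const _).add (hint1.const_mul _)
    have hpint2 : Integrable (fun ξ : ℝ => ((s^2*A + s^4/2*B) + (s*A + s^3*B)*ξ)
        + (s^2/2*B)*ξ^2) η := hpint1.add (hint2.const_mul _)
    have houter : (∫ ξ, I ξ ∂η)
        = ε*P*A + (ε*P)^2/2*B + ε*P*σ^2/2*B + ∫ ξ, ρ ξ ∂η := by
      rw [show I = fun ξ => (((s^2*A + s^4/2*B) + (s*A + s^3*B)*ξ + (s^2/2*B)*ξ^2) + ρ ξ)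
        from funext fun ξ => hpoly ξ]
      rw [integral_add hpint2 hρint, integral_add hpint1 (hint2.const_mul _),
        integral_add (integrable_const _) (hint1.const_mul _), integral_const,
        integral_const_mul, integral_const_mul, hmean, hvar]
      have hs4 : s^4 = (ε*P)^2 := by rw [show s^4 = (s^2)^2 by ring, hs2]
      have hs2' : s^2 = ε*P := hs2
      simp only [measure_univ, probReal_univ, ENNReal.toReal_one, smul_eq_mul, one_mul, mul_zero, add_zero]
      rw [hs4, hs2']
      ring
    have haeρ : ∀ᵐ ξ ∂η, ‖ρ ξ‖ ≤ (L:ℝ)*s^3*M^3*(1+C)^3*N := by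
      filter_upwards [hCae] with ξ hξ
      simpa [Real.norm_eq_abs] using hρle ξ hξ
    have hρI : |∫ ξ, ρ ξ ∂η| ≤ (L:ℝ)*s^3*M^3*(1+C)^3*N := by
      have h2 := norm_integral_le_of_norm_le_const haeρ
      simpa [Real.norm_eq_abs] using h2
    have hgoaleq : 1/ε * (∫ ξ, I ξ ∂η) - (P*A + σ^2*P/2*B + ε*(P^2/2*B))
        = (∫ ξ, ρ ξ ∂η) / ε := by
      rw [houter]
      field_simp
      ring
    rw [hgoaleq]
    have hs3 : s^3 ≤ ε * Real.sqrt ε := by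
      calc s^3 = (ε*P) * s := by rw [← hs2]; ring
        _ ≤ ε * Real.sqrt ε := mul_le_mul hεPε hsε hs0.le hε0.le
    calc |(∫ ξ, ρ ξ ∂η) / ε| = |∫ ξ, ρ ξ ∂η| / ε := by
          rw [abs_div, abs_of_pos hε0]
      _ ≤ ((L:ℝ)*(ε * Real.sqrt ε)*M^3*(1+C)^3*N) / ε := by
          gcongr
          refine hρI.trans ?_
          gcongr
      _ = K * Real.sqrt ε := by
          rw [hKdef]
          field_simp
  have hKs : Tendsto (fun ε : ℝ => K * Real.sqrt ε) (nhdsWithin 0 (Set.Ioi 0)) (nhds 0) := by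
    have h1 : Tendsto (fun ε : ℝ => K * Real.sqrt ε) (nhds 0) (nhds (K * Real.sqrt 0)) :=
      (continuous_const.mul Real.continuous_sqrt).tendsto 0
    simpa using h1.mono_left nhdsWithin_le_nhds
  have hGlim : Tendsto (fun ε : ℝ => P*A + σ^2*P/2*B + ε*(P^2/2*B))
      (nhdsWithin 0 (Set.Ioi 0)) (nhds (P*A + σ^2*P/2*B)) := by
    have h1 : Tendsto (fun ε : ℝ => P*A + σ^2*P/2*B + ε*(P^2/2*B)) (nhds 0)
        (nhds (P*A + σ^2*P/2*B + 0*(P^2/2*B))) := by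
      apply Continuous.tendsto
      fun_prop
    simpa using h1.mono_left nhdsWithin_le_nhds
  have hdiff : Tendsto (fun ε : ℝ =>
      (1/ε * ∫ ξ, (∫ v in (0:ℝ)..u,
          (φ (v + Real.sqrt (ε * P) * ΔA v * (Real.sqrt (ε * P) + ξ)) - φ v) * f v) ∂η)
        - (P*A + σ^2*P/2*B + ε*(P^2/2*B))) (nhdsWithin 0 (Set.Ioi 0)) (nhds 0) := by
    apply squeeze_zero_norm' _ hKs
    filter_upwards [Ioo_mem_nhdsGT_of_mem (by norm_num : (0:ℝ) ∈ Set.Ico 0 1)] with ε hε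
    simpa [Real.norm_eq_abs] using key ε hε
  have hsum := hGlim.add hdiff
  simp only [add_zero] at hsum
  have heq : (fun ε : ℝ => (P*A + σ^2*P/2*B + ε*(P^2/2*B))
      + ((1/ε * ∫ ξ, (∫ v in (0:ℝ)..u,
          (φ (v + Real.sqrt (ε * P) * ΔA v * (Real.sqrt (ε * P) + ξ)) - φ v) * f v) ∂η)
        - (P*A + σ^2*P/2*B + ε*(P^2/2*B))))
      = fun ε : ℝ => 1/ε * ∫ ξ, (∫ v in (0:ℝ)..u,
          (φ (v + Real.sqrt (ε * P) * ΔA v * (Real.sqrt (ε * P) + ξ)) - φ v) * f v) ∂η := by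
    funext ε
    ring
  rw [heq] at hsum
  exact hsum
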